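/- Let p(z;t) = (z − x₁(t))^{m₁+1} ∏_{n=2}^{N}(z − x_n(t)) with x₁,...,x_N differentiable complex functions of t having pairwise distinct values at time t, and coefficients y_n(t) defined by p(z;t) = z^{N+m₁} + Σ_{n=1}^{N+m₁} y_n(t) z^{N+m₁−n}. Then the derivative of the multiple root satisfies ẋ₁ = −[(m₁+1)! ∏_{n=2}^N (x₁ − x_n)]^{−1} Σ_{j=1}^N (N−j+1)_{m₁} x₁^{N−j} ẏ_j, where (α)_m denotes the Pochhammer symbol. -/

import Mathlib

open Finset Polynomial

lemma diffCoeff_X_sub_C {g : ℝ → ℂ} (hg : Differentiable ℝ g) (k : ℕ) :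
    Differentiable ℝ fun t => ((X : ℂ[X]) - C (g t)).coeff k := by
  match k with
  | 0 => simpa using hg.neg
  | 1 => simpa using differentiable_const (1 : ℂ)
  | (n+2) => simpa [coeff_X, coeff_C] using differentiable_const (0 : ℂ)

lemma diffCoeff_mul {q r : ℝ → ℂ[X]}
    (hq : ∀ k, Differentiable ℝ fun t => (q t).coeff k)
    (hr : ∀ k, Differentiable ℝ fun t => (r t).coeff k) (k : ℕ) :
    Differentiable ℝ fun t => (q t * r t).coeff k := by
  have : (fun t => (q t * r t).coeff k)
      = fun t => ∑ ij ∈ Finset.HasAntidiagonal.antidiagonal k, (q t).coeff ij.1 * (r t).coeff ij.2 :=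
    funext fun t => coeff_mul _ _ _
  rw [this]
  exact Differentiable.fun_sum fun ij _ => (hq _).mul (hr _)

lemma diffCoeff_prod {ι : Type*} [DecidableEq ι] (s : Finset ι) (f : ι → ℝ → ℂ)
    (hf : ∀ i, Differentiable ℝ (f i)) (k : ℕ) :
    Differentiable ℝ fun t => (∏ i ∈ s, ((X : ℂ[X]) - C (f i t))).coeff k := by
  induction s using Finset.induction generalizing k with
  | empty => simpa [coeff_one] using differentiable_const _
  | @insert a s ha ih =>
      have : (fun t => (∏ i ∈ insert a s, ((X : ℂ[X]) - C (f i t))).coeff k)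
          = fun t => (((X : ℂ[X]) - C (f a t)) * ∏ i ∈ s, ((X : ℂ[X]) - C (f i t))).coeff k := by
        funext t; rw [Finset.prod_insert ha]
      rw [this]
      exact diffCoeff_mul (diffCoeff_X_sub_C (hf a)) ih k

lemma diffCoeff_pow {g : ℝ → ℂ} (hg : Differentiable ℝ g) (m k : ℕ) :
    Differentiable ℝ fun t => (((X : ℂ[X]) - C (g t)) ^ m).coeff k := by
  have : (fun t => (((X : ℂ[X]) - C (g t)) ^ m).coeff k)
      = fun t => (∏ _i ∈ Finset.range m, ((X : ℂ[X]) - C (g t))).coeff k := by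
    funext t; rw [Finset.prod_const, Finset.card_range]
  rw [this]
  exact diffCoeff_prod _ _ (fun _ => hg) k

lemma hasDerivAt_fun_pow {f : ℝ → ℂ} {f' : ℂ} {t : ℝ} (h : HasDerivAt f f' t) (n : ℕ) :
    HasDerivAt (fun τ => f τ ^ n) ((n : ℂ) * f t ^ (n - 1) * f') t := by
  induction n with
  | zero => simpa using hasDerivAt_const t (1 : ℂ)
  | succ n ih =>
      have h2 := ih.mul h
      have he : ((fun τ => f τ ^ n) * f) = fun τ => f τ ^ (n + 1) := by
        funext τ; rw [Pi.mul_apply, ← pow_succ]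
      rw [he] at h2
      refine h2.congr_deriv ?_
      rcases n with _ | n
      · simp
      · simp only [Nat.add_sub_cancel]
        push_cast
        rw [pow_succ]
        ring

theorem multiple_root_first_derivative_formula
    (N m₁ : ℕ) (hN : 2 ≤ N) (hm : 1 ≤ m₁)
    (x : Fin N → ℝ → ℂ)
    (hdiff : ∀ n, Differentiable ℝ (x n))
    (hdist : ∀ t, Function.Injective fun n => x n t)
    (p : ℝ → Polynomial ℂ)
    (hp : ∀ t, p t = (X - C (x ⟨0, by omega⟩ t)) ^ (m₁ + 1) *
        ∏ n ∈ Finset.univ \ {(⟨0, by omega⟩ : Fin N)}, (X - C (x n t)))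
    (y : ℕ → ℝ → ℂ)
    (hy : ∀ j t, y j t = (p t).coeff (N + m₁ - j)) :
    ∀ t,
      deriv (x ⟨0, by omega⟩) t
        = -(((m₁ + 1).factorial : ℂ) *
              ∏ n ∈ Finset.univ \ {(⟨0, by omega⟩ : Fin N)},
                (x ⟨0, by omega⟩ t - x n t))⁻¹ *
            ∑ j ∈ Finset.Icc 1 N,
              (ascPochhammer ℂ m₁).eval ((N : ℂ) - (j : ℂ) + 1) *
                (x ⟨0, by omega⟩ t) ^ (N - j) * deriv (y j) t := by
  have hN0 : 0 < N := by omega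
  set z : Fin N := ⟨0, hN0⟩ with hzdef
  set s : Finset (Fin N) := Finset.univ \ {z} with hsdef
  set x₀ : ℝ → ℂ := x z with hx₀def
  have hp' : ∀ τ, p τ = ((X : ℂ[X]) - C (x₀ τ)) ^ (m₁ + 1) *
      ∏ n ∈ s, ((X : ℂ[X]) - C (x n τ)) := hp
  have hy' : ∀ j, y j = fun τ => (p τ).coeff (N + m₁ - j) := fun j => funext (hy j)
  set c : ℕ → ℝ → ℂ := fun k τ => (p τ).coeff k with hcdef
  -- differentiability of coefficients
  have hc : ∀ k, Differentiable ℝ (c k) := by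
    intro k
    have h1 : c k = fun τ =>
        (((X : ℂ[X]) - C (x₀ τ)) ^ (m₁+1) * ∏ n ∈ s, ((X : ℂ[X]) - C (x n τ))).coeff k := by
      funext τ
      show (p τ).coeff k = _
      rw [hp' τ]
    rw [h1]
    exact diffCoeff_mul (fun k => diffCoeff_pow (hdiff z) (m₁+1) k)
      (fun k => diffCoeff_prod s (fun n => x n) (fun n => hdiff n) k) k
  -- degree facts
  have hcard : s.card = N - 1 := by
    rw [hsdef, Finset.card_sdiff_of_subset (by simp)]
    simp
  have hmono : ∀ τ, (p τ).Monic := by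
    intro τ; rw [hp' τ]
    exact ((monic_X_sub_C _).pow _).mul (monic_prod_of_monic _ _ fun _ _ => monic_X_sub_C _)
  have hdeg : ∀ τ, (p τ).natDegree = N + m₁ := by
    intro τ; rw [hp' τ]
    rw [Monic.natDegree_mul ((monic_X_sub_C _).pow _)
      (monic_prod_of_monic _ _ fun _ _ => monic_X_sub_C _)]
    rw [natDegree_pow, natDegree_X_sub_C, natDegree_prod_of_monic _ _ fun _ _ => monic_X_sub_C _]
    simp only [natDegree_X_sub_C, Finset.sum_const, smul_eq_mul, mul_one]
    rw [hcard]; omega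
  have hcM : c (N + m₁) = fun _ => (1 : ℂ) := by
    funext τ
    have h2 := (hmono τ).coeff_natDegree
    rw [hdeg τ] at h2
    exact h2
  -- F ≡ 0
  have hF0 : ∀ τ, ∑ i ∈ Finset.range (N+1),
      (((i+m₁).descFactorial m₁ : ℂ) * (c (i+m₁) τ * (x₀ τ)^i)) = 0 := by
    intro τ
    have hlt : (derivative^[m₁] (p τ)).natDegree < N + 1 := by
      have h3 := natDegree_iterate_derivative (p τ) m₁
      rw [hdeg τ] at h3; omega
    have he := eval_eq_sum_range' hlt (x₀ τ)
    have hroot : eval (x₀ τ) (derivative^[m₁] (p τ)) = 0 := by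
      have hdvd : ((X : ℂ[X]) - C (x₀ τ))^(m₁+1) ∣ p τ := by
        rw [hp' τ]; exact dvd_mul_right _ _
      have h2 := pow_sub_dvd_iterate_derivative_of_pow_dvd m₁ hdvd
      rw [show m₁+1-m₁ = 1 from by omega, pow_one, dvd_iff_isRoot] at h2
      exact h2
    rw [hroot] at he
    refine Eq.trans (Finset.sum_congr rfl fun i _ => ?_) he.symm
    rw [coeff_iterate_derivative, nsmul_eq_mul]
    ring
  -- value of (m₁+1)-th derivative at the root
  have hG : ∀ τ, eval (x₀ τ) (derivative^[m₁+1] (p τ))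
      = ((m₁+1).factorial : ℂ) * ∏ n ∈ s, (x₀ τ - x n τ) := by
    intro τ
    rw [hp' τ, iterate_derivative_mul, eval_finset_sum]
    rw [Finset.sum_eq_single 0]
    · simp only [Nat.choose_zero_right, one_smul, Nat.sub_zero, Function.iterate_zero,
        iterate_derivative_X_sub_pow_self, id_eq, eval_mul, eval_natCast, eval_prod,
        eval_sub, eval_X, eval_C]
    · intro k hk hk0
      rw [iterate_derivative_X_sub_pow,
        show (m₁+1) - ((m₁+1) - k) = k from by
          have := Finset.mem_range.mp hk; omega]
      simp only [smul_mul_assoc, smul_smul, nsmul_eq_mul, eval_mul, eval_natCast, eval_pow,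
        eval_sub, eval_X, eval_C, sub_self]
      rw [zero_pow hk0]
      ring
    · intro h; exact absurd (Finset.mem_range.mpr (by omega)) h
  -- the (m₁+1)-th derivative value as a coefficient sum
  have hGsum : ∀ τ, eval (x₀ τ) (derivative^[m₁+1] (p τ))
      = ∑ i ∈ Finset.range N,
        (((i+(m₁+1)).descFactorial (m₁+1) : ℂ) * (c (i+(m₁+1)) τ * (x₀ τ)^i)) := by
    intro τ
    have hlt : (derivative^[m₁+1] (p τ)).natDegree < N := by
      have h3 := natDegree_iterate_derivative (p τ) (m₁+1)
      rw [hdeg τ] at h3; omega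
    rw [eval_eq_sum_range' hlt (x₀ τ)]
    refine Finset.sum_congr rfl fun i _ => ?_
    rw [coeff_iterate_derivative, nsmul_eq_mul]
    ring
  intro t
  -- derivative of F at t via term-by-term differentiation
  have hxd : HasDerivAt x₀ (deriv x₀ t) t := ((hdiff z) t).hasDerivAt
  have hasF : HasDerivAt (fun τ => ∑ i ∈ Finset.range (N+1),
      (((i+m₁).descFactorial m₁ : ℂ) * (c (i+m₁) τ * (x₀ τ)^i)))
      (∑ i ∈ Finset.range (N+1), (((i+m₁).descFactorial m₁ : ℂ) *
        (deriv (c (i+m₁)) t * (x₀ t)^i +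
          c (i+m₁) t * ((i : ℂ) * (x₀ t)^(i-1) * deriv x₀ t)))) t := by
    apply HasDerivAt.fun_sum
    intro i _
    exact ((((hc (i+m₁)) t).hasDerivAt.mul (hasDerivAt_fun_pow hxd i)).const_mul _)
  have hzero : (∑ i ∈ Finset.range (N+1), (((i+m₁).descFactorial m₁ : ℂ) *
      (deriv (c (i+m₁)) t * (x₀ t)^i +
        c (i+m₁) t * ((i : ℂ) * (x₀ t)^(i-1) * deriv x₀ t)))) = 0 := by
    have h1 := hasF.deriv
    rw [show (fun τ => ∑ i ∈ Finset.range (N+1),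
      (((i+m₁).descFactorial m₁ : ℂ) * (c (i+m₁) τ * (x₀ τ)^i))) = fun _ => (0:ℂ)
      from funext hF0, deriv_const] at h1
    exact h1.symm
  -- the ẋ part equals ẋ * (m₁+1)! * ∏
  have hB : ∑ i ∈ Finset.range (N+1), (((i+m₁).descFactorial m₁ : ℂ) *
        (c (i+m₁) t * ((i : ℂ) * (x₀ t)^(i-1) * deriv x₀ t)))
      = deriv x₀ t * (((m₁+1).factorial : ℂ) * ∏ n ∈ s, (x₀ t - x n t)) := by
    rw [← hG t, hGsum t, Finset.mul_sum, Finset.sum_range_succ']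
    simp only [Nat.cast_zero, zero_mul, mul_zero, add_zero]
    refine Finset.sum_congr rfl fun i _ => ?_
    have h1 : i + (m₁+1) = i + 1 + m₁ := by omega
    have h2 : (i+1+m₁).descFactorial (m₁+1) = (i+1) * ((i+1+m₁).descFactorial m₁) := by
      rw [Nat.descFactorial_succ]
      congr 1
      omega
    rw [h1, h2, show i + 1 - 1 = i from rfl]
    push_cast
    ring
  have hsplit : (∑ i ∈ Finset.range (N+1), (((i+m₁).descFactorial m₁ : ℂ) *
        (deriv (c (i+m₁)) t * (x₀ t)^i)))
      + deriv x₀ t * (((m₁+1).factorial : ℂ) * ∏ n ∈ s, (x₀ t - x n t)) = 0 := by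
    rw [← hB, ← hzero]
    rw [← Finset.sum_add_distrib]
    exact Finset.sum_congr rfl fun i _ => by ring
  -- drop the top (constant leading coefficient) term
  have hS : (∑ i ∈ Finset.range (N+1), (((i+m₁).descFactorial m₁ : ℂ) *
        (deriv (c (i+m₁)) t * (x₀ t)^i)))
      = ∑ i ∈ Finset.range N, (((i+m₁).descFactorial m₁ : ℂ) *
        (deriv (c (i+m₁)) t * (x₀ t)^i)) := by
    rw [Finset.sum_range_succ, hcM]
    simp
  -- the target sum equals our sum
  have hT : (∑ j ∈ Finset.Icc 1 N,
        (ascPochhammer ℂ m₁).eval ((N : ℂ) - (j : ℂ) + 1) * (x₀ t) ^ (N - j) * deriv (y j) t)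
      = ∑ i ∈ Finset.range N, (((i+m₁).descFactorial m₁ : ℂ) *
        (deriv (c (i+m₁)) t * (x₀ t)^i)) := by
    refine Finset.sum_bij' (fun j _ => N - j) (fun i _ => N - i) ?_ ?_ ?_ ?_ ?_
    · intro j hj
      simp only [Finset.mem_Icc] at hj
      simp only [Finset.mem_range]
      omega
    · intro i hi
      simp only [Finset.mem_range] at hi
      simp only [Finset.mem_Icc]
      omega
    · intro j hj
      simp only [Finset.mem_Icc] at hj
      show N - (N - j) = j
      omega
    · intro i hi
      simp only [Finset.mem_range] at hi
      show N - (N - i) = i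
      omega
    · intro j hj
      rw [Finset.mem_Icc] at hj
      have hjN : j ≤ N := hj.2
      have hj1 : 1 ≤ j := hj.1
      -- Pochhammer value
      have e1 : (N : ℂ) - (j : ℂ) + 1 = ((N - j + 1 : ℕ) : ℂ) := by
        push_cast [Nat.cast_sub hjN]
        ring
      have e2 : (ascPochhammer ℂ m₁).eval (((N - j + 1 : ℕ) : ℂ))
          = (((N - j + m₁).descFactorial m₁ : ℕ) : ℂ) := by
        rw [← ascPochhammer_eval_cast, ascPochhammer_nat_eq_descFactorial]
        congr 2
        omega
      -- derivative of y j
      have e3 : deriv (y j) t = deriv (c (N - j + m₁)) t := by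
        rw [hy' j]
        congr 1
        funext τ
        show (p τ).coeff (N + m₁ - j) = c (N - j + m₁) τ
        have : N + m₁ - j = N - j + m₁ := by omega
        rw [this]
      rw [e1, e2, e3]
      ring
  -- nonvanishing of the denominator
  have hK : (((m₁+1).factorial : ℂ) * ∏ n ∈ s, (x₀ t - x n t)) ≠ 0 := by
    refine mul_ne_zero (Nat.cast_ne_zero.mpr (Nat.factorial_ne_zero _)) ?_
    rw [Finset.prod_ne_zero_iff]
    intro n hn
    rw [hsdef, Finset.mem_sdiff, Finset.mem_singleton] at hn
    refine sub_ne_zero.mpr fun h => hn.2 ?_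
    exact (hdist t h).symm
  rw [hS] at hsplit
  show deriv x₀ t
      = -(((m₁ + 1).factorial : ℂ) * ∏ n ∈ s, (x₀ t - x n t))⁻¹ *
        ∑ j ∈ Finset.Icc 1 N,
          (ascPochhammer ℂ m₁).eval ((N : ℂ) - (j : ℂ) + 1) * (x₀ t) ^ (N - j) * deriv (y j) t
  rw [hT]
  have h9 : deriv x₀ t
      = -(∑ i ∈ Finset.range N, (((i+m₁).descFactorial m₁ : ℂ) *
          (deriv (c (i+m₁)) t * (x₀ t)^i)))
        / (((m₁+1).factorial : ℂ) * ∏ n ∈ s, (x₀ t - x n t)) := by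
    rw [eq_div_iff hK]
    linear_combination hsplit
  rw [h9, div_eq_mul_inv]
  ring
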